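/- arXiv:2109.13590 — 3 statements merged into one kernel-verified Lean document; each statement's English description precedes it below -/
import Mathlib

section
/- Let S, S' ⊆ ℝ^d be locally finite sets and let T : S → S' be a bijection. Then T is cyclically monotone if and only if T is locally optimal, i.e. for every bijection T̃ : S → S' such that the set {x ∈ S : T̃(x) ≠ T(x)} is finite, one has ∑_{x ∈ S, T̃(x) ≠ T(x)} (|T(x) − x|² − |T̃(x) − x|²) ≤ 0. -/
noncomputable section

/-- Euclidean space `ℝ^d`. -/
abbrev Euc (d : ℕ) := EuclideanSpace ℝ (Fin d)

/-- A set `S ⊆ ℝ^d` is locally finite: its intersection with every bounded set is finite. -/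
def IsLocallyFiniteSet {d : ℕ} (S : Set (Euc d)) : Prop :=
  ∀ B : Set (Euc d), Bornology.IsBounded B → (S ∩ B).Finite

/-- A map `T` is cyclically monotone on `S`: for every cycle `x₁, …, x_N` of points of `S`
(indices cyclic, `x₀ := x_N`), `∑ₙ T(xₙ) · (xₙ - xₙ₋₁) ≥ 0`. -/
def CyclicallyMonotoneMapOn {d : ℕ} (S : Set (Euc d)) (T : Euc d → Euc d) : Prop :=
  ∀ (N : ℕ) (x : Fin (N + 1) → Euc d), (∀ n, x n ∈ S) →
    0 ≤ ∑ n : Fin (N + 1), (inner ℝ (T (x n)) (x n - x (n - 1)) : ℝ)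

section cyc
variable {α : Type*}

/-- Abstract cyclic sum. -/
def cyc (G : α → α → ℝ) (N : ℕ) (x : Fin (N + 1) → α) : ℝ :=
  ∑ n : Fin (N + 1), G (x n) (x (n - 1))

lemma cyc_rotate (G : α → α → ℝ) (N : ℕ) (x : Fin (N + 1) → α) (k : Fin (N + 1)) :
    cyc G N (fun n => x (n + k)) = cyc G N x := by
  unfold cyc
  rw [← Equiv.sum_comp (Equiv.addRight k) (fun n => G (x n) (x (n - 1)))]
  refine Finset.sum_congr rfl fun n _ => ?_
  simp only [Equiv.coe_addRight]
  have h1 : n - 1 + k = n + k - 1 := by abel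
  rw [h1]

open Fin.NatCast in
lemma cyc_eq_range (G : α → α → ℝ) (N : ℕ) (x : Fin (N + 1) → α) :
    cyc G N x = ∑ n ∈ Finset.range (N + 1), G (x n) (x ((n : Fin (N+1)) - 1)) := by
  unfold cyc
  rw [← Fin.sum_univ_eq_sum_range]
  refine Finset.sum_congr rfl fun n _ => ?_
  rw [Fin.cast_val_eq_self]

theorem sum_range_add' (f : ℕ → ℝ) (m n : ℕ) : ∑ i ∈ Finset.range (m + n), f i = (∑ i ∈ Finset.range m, f i) + ∑ i ∈ Finset.range n, f (m + i) := by
  rw [Finset.range_eq_Ico, ← Finset.sum_Ico_consecutive f (Nat.zero_le m) (Nat.le_add_right m n),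
    Finset.sum_Ico_eq_sum_range (f := f) (m := m) (n := m + n)]
  simp only [Nat.add_sub_cancel_left, Finset.range_eq_Ico, Nat.sub_zero, Nat.zero_add]

open Fin.NatCast in
lemma fin_cast_mk {M n : ℕ} (h : n < M + 1) : ((n : ℕ) : Fin (M+1)) = ⟨n, h⟩ :=
  Fin.ext (Fin.val_cast_of_lt h)

lemma fin_zero_sub_one (M : ℕ) : ((0 : Fin (M+1)) - 1) = ⟨M, Nat.lt_succ_self M⟩ := by
  apply Fin.ext
  rw [Fin.coe_sub_one]
  simp

open Fin.NatCast in
lemma fin_cast_sub_one {M n : ℕ} (h0 : 0 < n) (h : n < M + 1) :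
    ((n : ℕ) : Fin (M+1)) - 1 = ⟨n - 1, by omega⟩ := by
  apply Fin.ext
  rw [Fin.coe_sub_one, fin_cast_mk h]
  rw [if_neg (by simp [Fin.ext_iff]; omega)]

lemma Gcongr {G : α → α → ℝ} {a b a' b' : α} (h1 : a = a') (h2 : b = b') : G a b = G a' b' := by
  rw [h1, h2]

lemma cyc_expand (G : α → α → ℝ) (N : ℕ) (x : Fin (N + 1) → α) :
    cyc G N x = G (x 0) (x ⟨N, Nat.lt_succ_self N⟩) +
      ∑ i ∈ Finset.range N,
        (if h : i < N then G (x ⟨i + 1, by omega⟩) (x ⟨i, by omega⟩) else 0) := by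
  unfold cyc
  rw [Fin.sum_univ_succ]
  congr 1
  · rw [fin_zero_sub_one]
  · rw [← Fin.sum_univ_eq_sum_range]
    refine Finset.sum_congr rfl fun i _ => ?_
    rw [dif_pos i.isLt]
    have hs : (i.succ : Fin (N+1)) - 1 = ⟨i.1, by omega⟩ := by
      apply Fin.ext
      rw [Fin.coe_sub_one, if_neg (Fin.succ_ne_zero i)]
      simp [Fin.val_succ]
    rw [hs]
    exact Gcongr (congrArg x (Fin.ext (by simp [Fin.val_succ]))) rfl

lemma assemble (A S1 FxJ S2 By Cz S1' S2' : ℝ) (h1 : S1 = S1') (h2 : FxJ = By) (h3 : S2 = S2')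
    (h4 : A = Cz) : A + ((S1 + FxJ) + S2) = (By + S1') + (Cz + S2') := by
  rw [h1, h2, h3, h4]; ring

lemma cyc_split (G : α → α → ℝ) (N j : ℕ) (h1 : 1 ≤ j) (hj : j ≤ N)
    (x : Fin (N + 1) → α) (hx : x 0 = x ⟨j, by omega⟩) :
    cyc G N x =
      cyc G (j - 1) (fun k => x ⟨k.1, by have := k.isLt; omega⟩) +
      cyc G (N - j) (fun k => x ⟨j + k.1, by have := k.isLt; omega⟩) := by
  have hsplit : ∀ f : ℕ → ℝ, ∑ i ∈ Finset.range N, f i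
      = ((∑ i ∈ Finset.range (j-1), f i) + f (j-1)) + ∑ i ∈ Finset.range (N-j), f (j + i) := by
    intro f
    have h2 := sum_range_add' f j (N-j)
    rw [show j + (N-j) = N by omega] at h2
    have h3 := Finset.sum_range_succ f (j-1)
    rw [show j - 1 + 1 = j by omega] at h3
    rw [h2, h3]
  rw [cyc_expand, cyc_expand, cyc_expand, hsplit]
  refine assemble _ _ _ _ _ _ _ _ ?_ ?_ ?_ ?_
  · refine Finset.sum_congr rfl fun i hi => ?_
    simp only [Finset.mem_range] at hi
    rw [dif_pos (show i < N by omega), dif_pos (show i < j - 1 from hi)]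
  · rw [dif_pos (show j - 1 < N by omega)]
    refine Gcongr ?_ ?_
    · calc x ⟨j - 1 + 1, by omega⟩ = x ⟨j, by omega⟩ := congrArg x (Fin.ext (show j - 1 + 1 = j by omega))
        _ = x 0 := hx.symm
        _ = x ⟨(0 : Fin (j - 1 + 1)).val, by simp⟩ := congrArg x (Fin.ext (by simp))
    · exact congrArg x (Fin.ext (by simp))
  · refine Finset.sum_congr rfl fun i hi => ?_
    simp only [Finset.mem_range] at hi
    rw [dif_pos (show j + i < N by omega), dif_pos (show i < N - j from hi)]
    exact Gcongr (congrArg x (Fin.ext (by simp; omega))) (congrArg x (Fin.ext (by simp)))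
  · refine Gcongr ?_ ?_
    · calc x 0 = x ⟨j, by omega⟩ := hx
        _ = x ⟨j + (0 : Fin (N - j + 1)).val, by simp; omega⟩ := congrArg x (Fin.ext (by simp))
    · exact congrArg x (Fin.ext (by simp; omega))

lemma cyc_nonneg_of_inj (G : α → α → ℝ) (S : Set α)
    (h : ∀ (N : ℕ) (x : Fin (N+1) → α), (∀ n, x n ∈ S) → Function.Injective x → 0 ≤ cyc G N x) :
    ∀ (N : ℕ) (x : Fin (N+1) → α), (∀ n, x n ∈ S) → 0 ≤ cyc G N x := by
  intro N
  induction N using Nat.strong_induction_on with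
  | _ N IH =>
    intro x hmem
    by_cases hinj : Function.Injective x
    · exact h N x hmem hinj
    · have main : ∀ i j : Fin (N+1), x i = x j → i.val < j.val → 0 ≤ cyc G N x := by
        intro i j hij hlt
        have hjN : j.val ≤ N := by have := j.isLt; omega
        set m : ℕ := j.val - i.val with hm
        have hm1 : 1 ≤ m := by omega
        have hmN : m ≤ N := by omega
        set x' : Fin (N+1) → α := fun n => x (n + i) with hx'
        have hadd : ((⟨m, by omega⟩ : Fin (N+1)) + i) = j := by
          apply Fin.ext
          rw [Fin.val_add]
          simp only
          rw [Nat.mod_eq_of_lt (by omega)]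
          omega
        have key : x' 0 = x' ⟨m, by omega⟩ := by
          simp only [hx']
          rw [zero_add, hadd, hij]
        have hsp := cyc_split G N m hm1 hmN x' key
        have ha := IH (m - 1) (by omega) (fun k => x' ⟨k.1, by have := k.isLt; omega⟩)
          (fun k => hmem _)
        have hb := IH (N - m) (by omega) (fun k => x' ⟨m + k.1, by have := k.isLt; omega⟩)
          (fun k => hmem _)
        rw [← cyc_rotate G N x i, ← hx', hsp]
        linarith
      simp only [Function.Injective, not_forall] at hinj
      obtain ⟨i, j, hij, hne⟩ := hinj
      rcases Nat.lt_or_ge i.val j.val with hlt | hge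
      · exact main i j hij hlt
      · refine main j i hij.symm (by
          rcases Nat.lt_or_ge j.val i.val with hh | hh
          · exact hh
          · exact absurd (Fin.ext (by omega)) hne)

end cyc

section inner

variable {d : ℕ}


/-- The summand for cyclical monotonicity. -/
def innG (T : Euc d → Euc d) : Euc d → Euc d → ℝ := fun a b => (inner ℝ (T a) (a - b) : ℝ)

lemma cyc_inner_orbit (T σ : Euc d → Euc d) (M : ℕ) (x : Fin (M+1) → Euc d)
    (hstep : ∀ k : Fin (M+1), σ (x k) = x (k+1)) :
    cyc (innG T) M x = ∑ k : Fin (M+1), (inner ℝ (T (x k) - T (σ (x k))) (x k) : ℝ) := by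
  unfold cyc innG
  have hre := Equiv.sum_comp (Equiv.addRight (1 : Fin (M+1)))
    (fun n => (inner ℝ (T (x n)) (x (n - 1)) : ℝ))
  simp only [Equiv.coe_addRight, add_sub_cancel_right] at hre
  simp only [inner_sub_right, inner_sub_left, hstep, Finset.sum_sub_distrib]
  rw [hre]

lemma key_perm (S : Set (Euc d)) (T : Euc d → Euc d)
    (hcm : ∀ (N : ℕ) (x : Fin (N+1) → Euc d), (∀ n, x n ∈ S) → 0 ≤ cyc (innG T) N x) :
    ∀ (F : Finset (Euc d)), ↑F ⊆ S → ∀ σ : Euc d → Euc d, Set.BijOn σ ↑F ↑F →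
      0 ≤ ∑ v ∈ F, (inner ℝ (T v - T (σ v)) v : ℝ) := by
  intro F
  induction F using Finset.strongInduction with
  | _ F IH =>
    intro hFS σ hσ
    classical
    rcases F.eq_empty_or_nonempty with rfl | ⟨a, ha⟩
    · simp
    -- iterates stay in F
    have hit : ∀ (k : ℕ) (u : Euc d), u ∈ F → σ^[k] u ∈ F := by
      intro k
      induction k with
      | zero => simpa using fun u hu => hu
      | succ k ih =>
        intro u hu
        rw [Function.iterate_succ_apply']
        exact hσ.mapsTo (ih u hu)
    -- cancellation
    have hcancel : ∀ (k : ℕ) (u v : Euc d), u ∈ F → v ∈ F → σ^[k] u = σ^[k] v → u = v := by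
      intro k
      induction k with
      | zero => simpa using fun u v _ _ h => h
      | succ k ih =>
        intro u v hu hv h
        rw [Function.iterate_succ_apply, Function.iterate_succ_apply] at h
        exact hσ.injOn hu hv (ih _ _ (hσ.mapsTo hu) (hσ.mapsTo hv) h)
    -- periodicity of a
    have hpp : a ∈ Function.periodicPts σ := by
      obtain ⟨i, hi, j, hj, hne, heq⟩ :=
        Finset.exists_ne_map_eq_of_card_lt_of_maps_to
          (s := Finset.range (F.card + 1)) (t := F)
          (by simp) (fun k _ => hit k a ha)
      have main : ∀ i j : ℕ, i < j → σ^[i] a = σ^[j] a → a ∈ Function.periodicPts σ := by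
        intro i j hlt heq
        refine ⟨j - i, by omega, ?_⟩
        have : σ^[i] (σ^[j-i] a) = σ^[i] a := by
          rw [← Function.iterate_add_apply, show i + (j - i) = j by omega, heq]
        exact hcancel i _ _ (hit _ _ ha) ha this
      rcases Nat.lt_or_ge i j with hlt | hge
      · exact main i j hlt heq
      · exact main j i (by omega) heq.symm
    set m := Function.minimalPeriod σ a with hmdef
    have hm0 : 0 < m := Function.minimalPeriod_pos_of_mem_periodicPts hpp
    obtain ⟨M, hM⟩ : ∃ M, m = M + 1 := ⟨m - 1, by omega⟩
    set xk : Fin (M+1) → Euc d := fun k => σ^[k.val] a with hxk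
    have hxmem : ∀ k, xk k ∈ F := fun k => hit _ _ ha
    have hxinj : Function.Injective xk := by
      intro p q hpq
      exact Fin.ext (Function.iterate_injOn_Iio_minimalPeriod
        (by simpa [← hM] using p.isLt) (by simpa [← hM] using q.isLt) hpq)
    have hstep : ∀ k : Fin (M+1), σ (xk k) = xk (k+1) := by
      intro k
      have hval : ((k + 1 : Fin (M+1))).val = (k.val + 1) % m := by
        rw [Fin.val_add, Fin.val_one', hM]
        conv_rhs => rw [Nat.add_mod, Nat.mod_eq_of_lt k.isLt]
      show σ (σ^[k.val] a) = σ^[((k + 1 : Fin (M+1))).val] a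
      rw [hval, Function.iterate_mod_minimalPeriod_eq, Function.iterate_succ_apply']
    -- the orbit
    set O : Finset (Euc d) := Finset.image xk Finset.univ with hO
    have hOF : O ⊆ F := by
      intro v hv
      rw [hO] at hv
      obtain ⟨k, _, rfl⟩ := Finset.mem_image.mp hv
      exact hxmem k
    have haO : a ∈ O := by
      rw [hO]
      exact Finset.mem_image.mpr ⟨0, Finset.mem_univ _, rfl⟩
    have hσO : ∀ v ∈ O, σ v ∈ O := by
      intro v hv
      rw [hO] at hv ⊢
      obtain ⟨k, _, rfl⟩ := Finset.mem_image.mp hv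
      rw [hstep k]
      exact Finset.mem_image.mpr ⟨k + 1, Finset.mem_univ _, rfl⟩
    have horb : 0 ≤ ∑ v ∈ O, (inner ℝ (T v - T (σ v)) v : ℝ) := by
      rw [hO, Finset.sum_image (fun p _ q _ h => hxinj h), ← cyc_inner_orbit T σ M xk hstep]
      exact hcm M xk (fun k => hFS (hxmem k))
    have hbij : Set.BijOn σ ↑(F \ O) ↑(F \ O) := by
      constructor
      · intro v hv
        simp only [Finset.coe_sdiff, Set.mem_diff, Finset.mem_coe] at hv ⊢
        refine ⟨hσ.mapsTo hv.1, fun hvO => hv.2 ?_⟩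
        rw [hO] at hvO
        obtain ⟨k, _, hk⟩ := Finset.mem_image.mp hvO
        have h2 : σ (xk (k - 1)) = xk k := by rw [hstep (k-1), sub_add_cancel]
        have : v = xk (k - 1) :=
          hσ.injOn hv.1 (hxmem (k-1)) (by rw [h2, hk])
        rw [this, hO]
        exact Finset.mem_image.mpr ⟨k - 1, Finset.mem_univ _, rfl⟩
      constructor
      · exact hσ.injOn.mono (by simp [Set.diff_subset])
      · intro w hw
        simp only [Finset.coe_sdiff, Set.mem_diff, Finset.mem_coe] at hw
        obtain ⟨u, hu, huw⟩ := hσ.surjOn hw.1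
        refine ⟨u, ?_, huw⟩
        simp only [Finset.coe_sdiff, Set.mem_diff, Finset.mem_coe]
        exact ⟨hu, fun huO => hw.2 (by rw [← huw]; exact hσO u huO)⟩
    have hrest := IH (F \ O) (Finset.sdiff_ssubset hOF ⟨a, haO⟩)
      (Set.Subset.trans (by simp [Set.diff_subset]) hFS) σ hbij
    rw [← Finset.sum_sdiff hOF]
    exact add_nonneg hrest horb

/-- Forward direction core. -/
lemma forward_dir (S S' : Set (Euc d)) (T : Euc d → Euc d) (hT : Set.BijOn T S S')
    (hcm : ∀ (N : ℕ) (x : Fin (N+1) → Euc d), (∀ n, x n ∈ S) → 0 ≤ cyc (innG T) N x)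
    (T' : Euc d → Euc d) (hT' : Set.BijOn T' S S')
    (hfin : {x ∈ S | T' x ≠ T x}.Finite) :
    ∑ x ∈ hfin.toFinset, (‖T x - x‖ ^ 2 - ‖T' x - x‖ ^ 2) ≤ 0 := by
  classical
  set F := hfin.toFinset with hF
  have hmemF : ∀ v, v ∈ F ↔ v ∈ S ∧ T' v ≠ T v := by
    intro v
    rw [hF, Set.Finite.mem_toFinset]
    exact Iff.rfl
  have hFS : ↑F ⊆ S := fun v hv => ((hmemF v).mp hv).1
  set σ : Euc d → Euc d := fun v => Function.invFunOn T S (T' v) with hσdef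
  have hkey : ∀ v ∈ F, σ v ∈ S ∧ T (σ v) = T' v := by
    intro v hv
    have h1 : T' v ∈ S' := hT'.mapsTo (hFS hv)
    rw [← hT.image_eq] at h1
    obtain ⟨u, hu, hTu⟩ := h1
    exact ⟨Function.invFunOn_mem ⟨u, hu, hTu⟩, Function.invFunOn_eq ⟨u, hu, hTu⟩⟩
  have hσF : ∀ v ∈ F, σ v ∈ F := by
    intro v hv
    obtain ⟨hσS, hTσ⟩ := hkey v hv
    rw [hmemF]
    refine ⟨hσS, fun heq => ?_⟩
    have h2 : T' (σ v) = T' v := by rw [heq, hTσ]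
    have h3 : σ v = v := hT'.injOn hσS (hFS hv) h2
    exact ((hmemF v).mp hv).2 (by rw [← hTσ, h3])
  have hinjF : Set.InjOn σ ↑F := by
    intro u hu v hv huv
    have h1 : T' u = T' v := by
      rw [← (hkey u hu).2, ← (hkey v hv).2, huv]
    exact hT'.injOn (hFS hu) (hFS hv) h1
  have himg : Finset.image σ F = F := by
    apply Finset.eq_of_subset_of_card_le
    · intro w hw
      obtain ⟨v, hv, rfl⟩ := Finset.mem_image.mp hw
      exact hσF v hv
    · rw [Finset.card_image_of_injOn hinjF]
  have hbij : Set.BijOn σ ↑F ↑F := by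
    refine ⟨fun v hv => hσF v hv, hinjF, fun w hw => ?_⟩
    have hw' : w ∈ F := hw
    rw [← himg] at hw'
    obtain ⟨v, hv, rfl⟩ := Finset.mem_image.mp hw'
    exact ⟨v, hv, rfl⟩
  have hperm := key_perm S T hcm F hFS σ hbij
  have hperm' : 0 ≤ ∑ v ∈ F, (inner ℝ (T v - T' v) v : ℝ) := by
    refine le_of_le_of_eq hperm (Finset.sum_congr rfl fun v hv => ?_)
    rw [(hkey v hv).2]
  have h0 : ∑ v ∈ F, ‖T' v‖ ^ 2 = ∑ v ∈ F, ‖T v‖ ^ 2 := by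
    have h1 : ∑ w ∈ Finset.image σ F, ‖T w‖ ^ 2 = ∑ v ∈ F, ‖T (σ v)‖ ^ 2 :=
      Finset.sum_image (fun u hu v hv h => hinjF hu hv h)
    rw [himg] at h1
    calc ∑ v ∈ F, ‖T' v‖ ^ 2 = ∑ v ∈ F, ‖T (σ v)‖ ^ 2 :=
          Finset.sum_congr rfl fun v hv => by rw [(hkey v hv).2]
      _ = ∑ v ∈ F, ‖T v‖ ^ 2 := h1.symm
  have hexp : ∀ v ∈ F, ‖T v - v‖ ^ 2 - ‖T' v - v‖ ^ 2
      = (‖T v‖ ^ 2 - ‖T' v‖ ^ 2) - 2 * (inner ℝ (T v - T' v) v : ℝ) := by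
    intro v _
    rw [norm_sub_sq_real, norm_sub_sq_real, inner_sub_left]
    ring
  rw [Finset.sum_congr rfl hexp, Finset.sum_sub_distrib, Finset.sum_sub_distrib,
    ← Finset.mul_sum, h0]
  linarith

lemma fin_val_add_one {M : ℕ} (k : Fin (M+1)) :
    ((k + 1 : Fin (M+1))).val = (k.val + 1) % (M+1) := by
  rw [Fin.val_add, Fin.val_one']
  conv_rhs => rw [Nat.add_mod, Nat.mod_eq_of_lt k.isLt]

lemma backward_dir (S S' : Set (Euc d)) (T : Euc d → Euc d) (hT : Set.BijOn T S S')
    (hopt : ∀ T' : Euc d → Euc d, Set.BijOn T' S S' →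
        ∀ hfin : {x ∈ S | T' x ≠ T x}.Finite,
          ∑ x ∈ hfin.toFinset, (‖T x - x‖ ^ 2 - ‖T' x - x‖ ^ 2) ≤ 0) :
    ∀ (N : ℕ) (x : Fin (N+1) → Euc d), (∀ n, x n ∈ S) → 0 ≤ cyc (innG T) N x := by
  refine cyc_nonneg_of_inj (innG T) S ?_
  intro N x hmem hinj
  cases N with
  | zero =>
    have h01 : (0 - 1 : Fin 1) = 0 := Subsingleton.elim _ _
    unfold cyc innG
    rw [Fin.sum_univ_one, h01, sub_self, inner_zero_right]
  | succ N' =>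
    classical
    set l := List.ofFn x with hl
    have hnd : l.Nodup := List.nodup_ofFn.mpr hinj
    have hlen : l.length = N' + 2 := by rw [hl, List.length_ofFn]
    set c := l.formPerm with hcdef
    have hc1 : ∀ n : Fin (N' + 2), c (x n) = x (n + 1) := by
      intro n
      have hn : (n : ℕ) < l.length := by rw [hlen]; exact n.isLt
      have h2 := List.formPerm_apply_getElem l hnd (n : ℕ) hn
      rw [← hcdef] at h2
      have hget : l[(n : ℕ)]'hn = x n := by
        simp only [hl, List.getElem_ofFn, Fin.eta]
      rw [hget] at h2
      rw [h2]
      simp only [hl, List.getElem_ofFn, List.length_ofFn]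
      exact congrArg x (Fin.ext (fin_val_add_one n).symm)
    have hc2 : ∀ y, y ∉ Set.range x → c y = y := by
      intro y hy
      apply List.formPerm_apply_of_notMem
      rw [hl, List.mem_ofFn]
      exact fun ⟨i, hi⟩ => hy ⟨i, hi⟩
    have hbijS : Set.BijOn (⇑c) S S := by
      refine ⟨?_, (Equiv.injective c).injOn, ?_⟩
      · intro y hy
        by_cases hr : y ∈ Set.range x
        · obtain ⟨n, rfl⟩ := hr
          rw [hc1 n]
          exact hmem _
        · rw [hc2 y hr]
          exact hy
      · intro y hy
        by_cases hr : y ∈ Set.range x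
        · obtain ⟨n, rfl⟩ := hr
          exact ⟨x (n - 1), hmem _, by rw [hc1 (n - 1), sub_add_cancel]⟩
        · exact ⟨y, hy, hc2 y hr⟩
    have hT' : Set.BijOn (T ∘ ⇑c) S S' := hT.comp hbijS
    have hDsub : {y ∈ S | (T ∘ ⇑c) y ≠ T y} ⊆ Set.range x := by
      intro y hy
      by_contra hr
      exact hy.2 (by show T (c y) = T y; rw [hc2 y hr])
    have hfin : {y ∈ S | (T ∘ ⇑c) y ≠ T y}.Finite := (Set.finite_range x).subset hDsub
    have happ := hopt (T ∘ ⇑c) hT' hfin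
    have hne : ∀ n : Fin (N' + 2), x (n + 1) ≠ x n := by
      intro n h
      have h2 : n + 1 = n + 0 := by rw [add_zero]; exact hinj h
      exact one_ne_zero (add_left_cancel h2)
    have hDeq : hfin.toFinset = Finset.image x Finset.univ := by
      apply Finset.Subset.antisymm
      · intro v hv
        rw [Set.Finite.mem_toFinset] at hv
        obtain ⟨n, rfl⟩ := hDsub hv
        exact Finset.mem_image.mpr ⟨n, Finset.mem_univ _, rfl⟩
      · intro v hv
        obtain ⟨n, _, rfl⟩ := Finset.mem_image.mp hv
        rw [Set.Finite.mem_toFinset]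
        refine ⟨hmem n, fun heq => ?_⟩
        have h3 : T (x (n + 1)) = T (x n) := by rw [← hc1 n]; exact heq
        exact hne n (hT.injOn (hmem _) (hmem _) h3)
    rw [hDeq, Finset.sum_image (fun p _ q _ h => hinj h)] at happ
    simp only [Function.comp_apply, hc1] at happ
    have hcanc : ∑ n : Fin (N' + 2), ‖T (x (n + 1))‖ ^ 2 = ∑ n : Fin (N' + 2), ‖T (x n)‖ ^ 2 := by
      have h4 := Equiv.sum_comp (Equiv.addRight (1 : Fin (N' + 2))) (fun n => ‖T (x n)‖ ^ 2)
      simpa using h4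
    rw [cyc_inner_orbit T (⇑c) (N' + 1) x hc1]
    simp only [hc1, inner_sub_left, Finset.sum_sub_distrib]
    simp only [norm_sub_sq_real, Finset.sum_sub_distrib, Finset.sum_add_distrib,
      ← Finset.mul_sum] at happ
    linarith [hcanc, happ]

end inner

/-- **Cyclical monotonicity is equivalent to local optimality.** Let `S, S' ⊆ ℝ^d` be
locally finite sets and `T : S → S'` a bijection. Then `T` is cyclically monotone iff for
every bijection `T̃ : S → S'` differing from `T` at only finitely many points of `S`,
`∑_{x ∈ S, T̃(x) ≠ T(x)} (|T(x) - x|² - |T̃(x) - x|²) ≤ 0`. -/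
theorem cyclicallyMonotone_iff_locally_optimal
    {d : ℕ} (S S' : Set (Euc d))
    (hS : IsLocallyFiniteSet S) (hS' : IsLocallyFiniteSet S')
    (T : Euc d → Euc d) (hT : Set.BijOn T S S') :
    CyclicallyMonotoneMapOn S T ↔
      ∀ T' : Euc d → Euc d, Set.BijOn T' S S' →
        ∀ hfin : {x ∈ S | T' x ≠ T x}.Finite,
          ∑ x ∈ hfin.toFinset, (‖T x - x‖ ^ 2 - ‖T' x - x‖ ^ 2) ≤ 0 := by
  have hdef : CyclicallyMonotoneMapOn S T ↔
      ∀ (N : ℕ) (x : Fin (N + 1) → Euc d), (∀ n, x n ∈ S) → 0 ≤ cyc (innG T) N x := Iff.rfl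
  rw [hdef]
  constructor
  · intro hcm T' hT' hfin
    exact forward_dir S S' T hT hcm T' hT' hfin
  · intro hopt
    exact backward_dir S S' T hT hopt

end
end

section
/- There exist constants C, c > 0 depending only on the dimension d with the following property. Let ε ∈ (0,1], R > 0, n ∈ [1/2, 2], and let μ be a Borel measure on ℝ^d. Suppose there is a Borel measure π on ℝ^d × ℝ^d whose first marginal is μ restricted to (−2R,2R)^d and whose second marginal is n times the Lebesgue measure restricted to (−2R,2R)^d, satisfying ∫ |x − y|² dπ(x,y) ≤ (4εR)^{d+2}. Then every axis-parallel cube Q ⊆ (−2R,2R)^d of side length r with r ≥ CεR satisfies μ(Q) ≥ c r^d. -/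
open MeasureTheory

noncomputable section

/-- The open box `(-R, R)^d`. -/
def openBox (d : ℕ) (R : ℝ) : Set (Euc d) := {x | ∀ i, x i ∈ Set.Ioo (-R) R}

/-- The axis-parallel closed cube with lower-left corner `a` and side length `r`,
i.e. a translate of `[0, r]^d`. -/
def cube {d : ℕ} (a : Euc d) (r : ℝ) : Set (Euc d) := {x | ∀ i, x i ∈ Set.Icc (a i) (a i + r)}

lemma measurable_coord {d : ℕ} (i : Fin d) : Measurable fun x : Euc d => x i :=
  (EuclideanSpace.proj i : Euc d →L[ℝ] ℝ).continuous.measurable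

lemma measurableSet_iccBox {d : ℕ} (l u : Fin d → ℝ) :
    MeasurableSet {x : Euc d | ∀ i, x i ∈ Set.Icc (l i) (u i)} := by
  have h : {x : Euc d | ∀ i, x i ∈ Set.Icc (l i) (u i)}
      = ⋂ i, (fun x : Euc d => x i) ⁻¹' Set.Icc (l i) (u i) := by
    ext x; simp
  rw [h]
  exact MeasurableSet.iInter fun i => (measurable_coord i) measurableSet_Icc

lemma volume_iccBox {d : ℕ} (l : Fin d → ℝ) (s : ℝ) (hs : 0 ≤ s) :
    volume {x : Euc d | ∀ i, x i ∈ Set.Icc (l i) (l i + s)} = ENNReal.ofReal (s ^ d) := by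
  have hset : {x : Euc d | ∀ i, x i ∈ Set.Icc (l i) (l i + s)}
      = (MeasurableEquiv.toLp 2 (Fin d → ℝ)).symm ⁻¹'
        (Set.univ.pi fun i => Set.Icc (l i) (l i + s)) := by
    ext x
    simp only [Set.mem_setOf_eq, Set.mem_preimage, Set.mem_pi, Set.mem_univ, true_implies]
    rfl
  have hmeas : MeasurableSet (Set.univ.pi fun i : Fin d => Set.Icc (l i) (l i + s)) :=
    MeasurableSet.univ_pi fun i => measurableSet_Icc
  rw [hset, (EuclideanSpace.volume_preserving_symm_measurableEquiv_toLp (Fin d)).measure_preimage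
    hmeas.nullMeasurableSet, volume_pi_pi]
  simp only [Real.volume_Icc, add_sub_cancel_left]
  rw [Finset.prod_const, ← ENNReal.ofReal_pow hs, Finset.card_univ, Fintype.card_fin]

/-- In Euclidean space, each coordinate's square is at most the squared norm. -/
lemma sq_coord_le_normSq {d : ℕ} (v : Euc d) (i : Fin d) : (v i) ^ 2 ≤ ‖v‖ ^ 2 := by
  have h : ‖v‖ ^ 2 = ∑ j, ‖v j‖ ^ 2 := by
    rw [EuclideanSpace.norm_eq, Real.sq_sqrt]
    positivity
  rw [h]
  have := Finset.single_le_sum (f := fun j => ‖v j‖ ^ 2)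
    (fun j _ => by positivity) (Finset.mem_univ i)
  calc (v i) ^ 2 = ‖v i‖ ^ 2 := by rw [Real.norm_eq_abs, sq_abs]
    _ ≤ _ := this

/-- **There are enough points on mesoscopic scales.** There are dimensional constants
`C, c > 0` such that: if `ε ∈ (0,1]`, `R > 0`, `n ∈ [1/2, 2]`, and `π` is a coupling
between `μ ⌞ (-2R, 2R)^d` and `n Leb ⌞ (-2R, 2R)^d` with `∫ |x - y|² dπ ≤ (4εR)^{d+2}`,
then every axis-parallel cube `Q ⊆ (-2R, 2R)^d` of side length `r ≥ CεR` satisfies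
`μ(Q) ≥ c r^d`. -/
theorem enough_points_on_mesoscopic_scales (d : ℕ) :
    ∃ C : ℝ, 0 < C ∧ ∃ c : ℝ, 0 < c ∧
      ∀ (ε R n : ℝ), ε ∈ Set.Ioc (0 : ℝ) 1 → 0 < R → n ∈ Set.Icc (1 / 2 : ℝ) 2 →
      ∀ (μ : Measure (Euc d)) (π : Measure (Euc d × Euc d)),
        π.map Prod.fst = μ.restrict (openBox d (2 * R)) →
        π.map Prod.snd = ENNReal.ofReal n • volume.restrict (openBox d (2 * R)) →
        (∫⁻ p, ENNReal.ofReal (‖p.1 - p.2‖ ^ 2) ∂π) ≤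
          ENNReal.ofReal ((4 * ε * R) ^ (d + 2)) →
        ∀ (a : Euc d) (r : ℝ), C * ε * R ≤ r → cube a r ⊆ openBox d (2 * R) →
          ENNReal.ofReal (c * r ^ d) ≤ μ (cube a r) := by
  set K : ℝ := 2 ^ d with hK
  have hK1 : (1 : ℝ) ≤ K := one_le_pow₀ (by norm_num)
  have hK0 : (0 : ℝ) < K := by linarith
  refine ⟨1024 * K ^ 3, by positivity, 1 / (4 * K), by positivity, ?_⟩
  intro ε R n hε hR hn μ π hfst hsnd hcost a r hr hQbox
  set C : ℝ := 1024 * K ^ 3 with hCdef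
  set c : ℝ := 1 / (4 * K) with hcdef
  have hC0 : (0 : ℝ) < C := by positivity
  have hr0 : (0 : ℝ) < r := lt_of_lt_of_le (mul_pos (mul_pos hC0 hε.1) hR) hr
  set box := openBox d (2 * R) with hbox
  set Q := cube a r with hQ
  set Q' : Set (Euc d) := {x | ∀ i, x i ∈ Set.Icc (a i + r / 4) ((a i + r / 4) + r / 2)}
    with hQ'
  have hQmeas : MeasurableSet Q := measurableSet_iccBox a (fun i => a i + r)
  have hQ'meas : MeasurableSet Q' :=
    measurableSet_iccBox (fun i => a i + r / 4) (fun i => (a i + r / 4) + r / 2)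
  have hQ'Q : Q' ⊆ Q := by
    intro x hx i
    have h := hx i
    constructor <;> [linarith [h.1]; linarith [h.2]]
  have hQ'box : Q' ⊆ box := fun x hx => hQbox (hQ'Q hx)
  -- volume of the inner cube
  have hQ'vol : volume Q' = ENNReal.ofReal ((r / 2) ^ d) :=
    volume_iccBox (fun i => a i + r / 4) (r / 2) (by linarith)
  -- the "bad" set where transport distance is large
  set bad : Set (Euc d × Euc d) :=
    {p | ENNReal.ofReal ((r / 4) ^ 2) ≤ ENNReal.ofReal (‖p.1 - p.2‖ ^ 2)} with hbad
  -- Chebyshev bound on the bad set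
  have hmeasf : AEMeasurable (fun p : Euc d × Euc d => ENNReal.ofReal (‖p.1 - p.2‖ ^ 2)) π := by
    exact (ENNReal.continuous_ofReal.comp
      (((continuous_fst.sub continuous_snd).norm).pow 2)).measurable.aemeasurable
  have hcheb : ENNReal.ofReal ((r / 4) ^ 2) * π bad ≤
      ENNReal.ofReal ((4 * ε * R) ^ (d + 2)) :=
    le_trans (mul_meas_ge_le_lintegral₀ hmeasf _) hcost
  have hr4pos : (0 : ℝ) < (r / 4) ^ 2 := by positivity
  have hbadle : π bad ≤ ENNReal.ofReal ((4 * ε * R) ^ (d + 2) / (r / 4) ^ 2) := by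
    rw [ENNReal.ofReal_div_of_pos hr4pos]
    rw [ENNReal.le_div_iff_mul_le (Or.inl (by simp [ENNReal.ofReal_pos.2 hr4pos, ne_of_gt]))
      (Or.inl ENNReal.ofReal_ne_top)]
    rw [mul_comm]
    exact hcheb
  -- set inclusion : snd ⁻¹ Q' ⊆ fst ⁻¹ Q ∪ bad
  have hincl : Prod.snd ⁻¹' Q' ⊆ Prod.fst ⁻¹' Q ∪ bad := by
    intro p hp
    by_cases hx : p.1 ∈ Q
    · exact Or.inl hx
    · right
      simp only [hQ, cube, Set.mem_setOf_eq, not_forall] at hx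
      obtain ⟨i, hi⟩ := hx
      have hy := hp i
      simp only [Set.mem_Icc] at hy
      have hcoord : (r / 4) ^ 2 ≤ (p.1 i - p.2 i) ^ 2 := by
        rcases not_and_or.1 (fun h => hi ⟨h.1, h.2⟩) with h | h
        · push_neg at h
          nlinarith [hy.1, hy.2]
        · push_neg at h
          nlinarith [hy.1, hy.2]
      have hnorm : (p.1 i - p.2 i) ^ 2 ≤ ‖p.1 - p.2‖ ^ 2 := by
        have := sq_coord_le_normSq (p.1 - p.2) i
        simpa using this
      exact ENNReal.ofReal_le_ofReal (le_trans hcoord hnorm)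
  -- mass of the inner cube under the second marginal
  have hsndQ' : π (Prod.snd ⁻¹' Q') = ENNReal.ofReal (n * (r / 2) ^ d) := by
    have hn0 : (0 : ℝ) ≤ n := by linarith [hn.1]
    have hmap := Measure.map_apply (measurable_snd) hQ'meas (μ := π) (f := Prod.snd)
    rw [← hmap, hsnd, Measure.smul_apply, smul_eq_mul, Measure.restrict_apply hQ'meas,
      Set.inter_eq_left.2 hQ'box, hQ'vol, ← ENNReal.ofReal_mul hn0]
  -- mass of the cube under the first marginal
  have hfstQ : π (Prod.fst ⁻¹' Q) = μ Q := by
    have hmap := Measure.map_apply (measurable_fst) hQmeas (μ := π) (f := Prod.fst)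
    rw [← hmap, hfst, Measure.restrict_apply hQmeas, Set.inter_eq_left.2 hQbox]
  set E : ℝ := (4 * ε * R) ^ (d + 2) / (r / 4) ^ 2 with hE
  -- combine the three estimates
  have key : ENNReal.ofReal (n * (r / 2) ^ d) ≤ μ Q + ENNReal.ofReal E := by
    calc ENNReal.ofReal (n * (r / 2) ^ d) = π (Prod.snd ⁻¹' Q') := hsndQ'.symm
      _ ≤ π (Prod.fst ⁻¹' Q ∪ bad) := measure_mono hincl
      _ ≤ π (Prod.fst ⁻¹' Q) + π bad := measure_union_le _ _
      _ ≤ μ Q + ENNReal.ofReal E := by rw [hfstQ]; exact add_le_add_right hbadle _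
  -- now the purely real-arithmetic part
  have hε0 : (0 : ℝ) < ε := hε.1
  have h4εR : (0 : ℝ) < 4 * ε * R := by positivity
  have hE0 : (0 : ℝ) ≤ E := div_nonneg (pow_nonneg h4εR.le _) (sq_nonneg _)
  have hC1 : (1 : ℝ) ≤ C := by
    have h3 : (1 : ℝ) ≤ K ^ 3 := one_le_pow₀ hK1
    rw [hCdef]; nlinarith
  have h4d : (4 : ℝ) ^ d = K ^ 2 := by
    rw [hK, ← pow_mul, show (4 : ℝ) = 2 ^ 2 by norm_num, ← pow_mul, mul_comm]
  have hεR : 4 * ε * R ≤ 4 * r / C := by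
    rw [le_div_iff₀ hC0]
    nlinarith
  have h1 : (4 * ε * R) ^ (d + 2) ≤ (4 * r) ^ (d + 2) / C := by
    calc (4 * ε * R) ^ (d + 2) ≤ (4 * r / C) ^ (d + 2) :=
          pow_le_pow_left₀ h4εR.le hεR _
      _ = (4 * r) ^ (d + 2) / C ^ (d + 2) := div_pow _ _ _
      _ ≤ (4 * r) ^ (d + 2) / C := by
          gcongr
          exact le_self_pow₀ hC1 (by omega)
  have hEbound : E ≤ c * r ^ d := by
    have h2 : E ≤ ((4 * r) ^ (d + 2) / C) / (r / 4) ^ 2 := by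
      rw [hE]; gcongr
    have h3 : ((4 * r) ^ (d + 2) / C) / (r / 4) ^ 2 = c * r ^ d := by
      rw [hcdef, hCdef, mul_pow, pow_add, pow_add, h4d]
      field_simp
      ring
    linarith [h2, h3.le]
  have hn2 : 2 * (c * r ^ d) ≤ n * (r / 2) ^ d := by
    have hrd : (0 : ℝ) ≤ r ^ d := by positivity
    have hpow2 : (r / 2) ^ d = r ^ d / K := by rw [div_pow, hK]
    have key2 : (1 / 2 : ℝ) * (r ^ d / K) ≤ n * (r ^ d / K) :=
      mul_le_mul_of_nonneg_right hn.1 (div_nonneg hrd hK0.le)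
    have heq : 2 * (c * r ^ d) = (1 / 2 : ℝ) * (r ^ d / K) := by
      rw [hcdef]; field_simp; ring
    rw [hpow2, heq]
    exact key2
  have hreal : c * r ^ d ≤ n * (r / 2) ^ d - E := by linarith
  calc ENNReal.ofReal (c * r ^ d) ≤ ENNReal.ofReal (n * (r / 2) ^ d - E) :=
        ENNReal.ofReal_le_ofReal hreal
    _ = ENNReal.ofReal (n * (r / 2) ^ d) - ENNReal.ofReal E := ENNReal.ofReal_sub _ hE0
    _ ≤ μ Q := tsub_le_iff_right.2 key

end
end

section
/- Let d ≥ 1, let S ⊆ ℝ^d, and let T : S → ℝ^d be a monotone map, i.e. (T(x') − T(x''))·(x' − x'') ≥ 0 for all x', x'' ∈ S. Let x ∈ S, r > 0, ρ ∈ (0,1], and suppose there are points x₁, …, x_{d+1} ∈ S such that for every n = 1, …, d+1: r ≤ |x_n − x| ≤ 2r and |T(x_n) − x_n| ≤ r, and such that the closed Euclidean ball of radius ρ centered at the origin is contained in the convex hull of the unit vectors {(x_n − x)/|x_n − x| : n = 1, …, d+1}. Then |T(x) − x| ≤ 6r/ρ. -/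
noncomputable section

/-- **Shielding estimate for monotone maps.** Let `T : S → ℝ^d` be monotone. If around
`x ∈ S` there are points `x₁, …, x_{d+1} ∈ S` with `r ≤ |xₙ - x| ≤ 2r` and
`|T(xₙ) - xₙ| ≤ r`, whose normalized directions `(xₙ - x)/|xₙ - x|` have a convex hull
containing the closed ball of radius `ρ ∈ (0, 1]`, then `|T(x) - x| ≤ 6r/ρ`. -/
theorem monotone_shielding_estimate
    (d : ℕ) (hd : 1 ≤ d) (S : Set (Euc d)) (T : Euc d → Euc d)
    (hmono : ∀ x' ∈ S, ∀ x'' ∈ S, 0 ≤ (inner ℝ (T x' - T x'') (x' - x'') : ℝ))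
    (x : Euc d) (hx : x ∈ S) (r ρ : ℝ) (hr : 0 < r) (hρ : ρ ∈ Set.Ioc (0 : ℝ) 1)
    (xs : Fin (d + 1) → Euc d) (hxs : ∀ n, xs n ∈ S)
    (hlow : ∀ n, r ≤ ‖xs n - x‖) (hhigh : ∀ n, ‖xs n - x‖ ≤ 2 * r)
    (hT : ∀ n, ‖T (xs n) - xs n‖ ≤ r)
    (hconv : Metric.closedBall (0 : Euc d) ρ ⊆
      convexHull ℝ (Set.range fun n => ‖xs n - x‖⁻¹ • (xs n - x))) :
    ‖T x - x‖ ≤ 6 * r / ρ := by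
  obtain ⟨hρ0, hρ1⟩ := hρ
  set v := T x - x with hv
  by_cases hv0 : v = 0
  · rw [hv0, norm_zero]
    positivity
  have hvn : 0 < ‖v‖ := norm_pos_iff.mpr hv0
  -- each direction satisfies the halfspace bound
  have key : ∀ n, (inner ℝ v (‖xs n - x‖⁻¹ • (xs n - x)) : ℝ) ≤ 6 * r := by
    intro n
    have hn : 0 < ‖xs n - x‖ := lt_of_lt_of_le hr (hlow n)
    have hdecomp : v = (T x - T (xs n)) + (T (xs n) - xs n) + (xs n - x) := by
      rw [hv]; abel
    have h1 : (inner ℝ (T x - T (xs n)) (xs n - x) : ℝ) ≤ 0 := by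
      have hm := hmono (xs n) (hxs n) x hx
      have heq : (inner ℝ (T x - T (xs n)) (xs n - x) : ℝ)
          = - inner ℝ (T (xs n) - T x) (xs n - x) := by
        rw [← inner_neg_left, neg_sub]
      rw [heq]
      linarith
    have h2 : (inner ℝ (T (xs n) - xs n) (xs n - x) : ℝ) ≤ r * (2 * r) := by
      calc (inner ℝ (T (xs n) - xs n) (xs n - x) : ℝ)
          ≤ ‖T (xs n) - xs n‖ * ‖xs n - x‖ := real_inner_le_norm _ _
        _ ≤ r * (2 * r) := by
            apply mul_le_mul (hT n) (hhigh n) hn.le hr.le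
    have h3 : (inner ℝ (xs n - x) (xs n - x) : ℝ) ≤ (2*r) * (2*r) := by
      rw [real_inner_self_eq_norm_mul_norm]
      exact mul_le_mul (hhigh n) (hhigh n) hn.le (by linarith)
    have hb : (inner ℝ v (xs n - x) : ℝ) ≤ 6 * r ^ 2 := by
      rw [hdecomp, inner_add_left, inner_add_left]
      nlinarith
    rw [real_inner_smul_right]
    calc ‖xs n - x‖⁻¹ * inner ℝ v (xs n - x)
        ≤ ‖xs n - x‖⁻¹ * (6 * r ^ 2) := by
          exact mul_le_mul_of_nonneg_left hb (inv_nonneg.mpr hn.le)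
      _ ≤ r⁻¹ * (6 * r ^ 2) := by
          apply mul_le_mul_of_nonneg_right (inv_anti₀ hr (hlow n)) (by positivity)
      _ = 6 * r := by field_simp
  -- the halfspace contains the convex hull
  have hhull : ∀ y ∈ convexHull ℝ
      (Set.range fun n => ‖xs n - x‖⁻¹ • (xs n - x)), (inner ℝ v y : ℝ) ≤ 6 * r := by
    intro y hy
    have hconvex : Convex ℝ {y : Euc d | (inner ℝ v y : ℝ) ≤ 6 * r} :=
      convex_halfSpace_le (innerSL ℝ v).isLinear (6 * r)
    have := convexHull_min (by rintro _ ⟨n, rfl⟩; exact key n) hconvex hy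
    exact this
  -- apply at ρ • (v / ‖v‖)
  set u : Euc d := (ρ * ‖v‖⁻¹) • v with hu
  have humem : u ∈ Metric.closedBall (0 : Euc d) ρ := by
    simp only [Metric.mem_closedBall, dist_zero_right, hu, norm_smul]
    rw [norm_mul, Real.norm_eq_abs, abs_of_pos hρ0, Real.norm_eq_abs,
      abs_of_pos (inv_pos.mpr hvn)]
    rw [mul_assoc, inv_mul_cancel₀ hvn.ne', mul_one]
  have hfin : (inner ℝ v u : ℝ) ≤ 6 * r := hhull u (hconv humem)
  rw [hu, real_inner_smul_right, real_inner_self_eq_norm_mul_norm] at hfin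
  have : ρ * ‖v‖ ≤ 6 * r := by
    have hne : ‖v‖ ≠ 0 := hvn.ne'
    have heq : ρ * ‖v‖⁻¹ * (‖v‖ * ‖v‖) = ρ * ‖v‖ := by field_simp
    linarith [heq ▸ hfin]
  rw [le_div_iff₀ hρ0]
  nlinarith

end
end
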